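/- For j ≥ 1, if ω is a binary word with |ω|_0 ≤ |ω|_1 avoiding the factor (10)^j1 and ω ends at ordinate k ≥ 2 (i.e., |ω|_1 − |ω|_0 = k) and does not end with the suffix (10)^j, then for all 1 ≤ h ≤ j and 2 ≤ m ≤ k, the word ω·1·0^m·(10)^{h-1} avoids the factor (10)^j1 and has |ω|_1 + h ones and ordinate k + 1 − m. -/

import Mathlib

/-- The pattern `(10)^j 1` (`true` = 1 / up step, `false` = 0 / down step). -/
def pat (j : ℕ) : List Bool := (List.replicate j [true, false]).flatten ++ [true]

/-- `(10)^j`. -/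
def alt (j : ℕ) : List Bool := (List.replicate j [true, false]).flatten

def ht (w : List Bool) : ℤ := (w.count true : ℤ) - (w.count false : ℤ)

lemma alt_succ (n : ℕ) : alt (n+1) = true :: false :: alt n := by
  simp [alt, List.replicate_succ]

lemma pat_eq (j : ℕ) : pat j = alt j ++ [true] := rfl

lemma pat_succ (j : ℕ) : pat (j+1) = true :: false :: pat j := by
  simp [pat_eq, alt_succ]

lemma count_alt (n : ℕ) (b : Bool) : (alt n).count b = n := by
  induction n with
  | zero => cases b <;> simp [alt]
  | succ n ih => cases b <;> simp_all [alt_succ, List.count_cons]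

lemma length_alt (n : ℕ) : (alt n).length = 2 * n := by
  induction n with
  | zero => simp [alt]
  | succ n ih => rw [alt_succ]; simp [ih]; ring

lemma length_pat (j : ℕ) : (pat j).length = 2 * j + 1 := by
  rw [pat_eq]; simp [length_alt]

lemma pat_head (j : ℕ) : (pat j).head? = some true := by
  cases j with
  | zero => rfl
  | succ j => rw [pat_succ]; rfl

lemma chain_pat (j : ℕ) : List.Chain' (· ≠ ·) (pat j) := by
  induction j with
  | zero => simp [pat, List.Chain']
  | succ j ih =>
    rw [pat_succ, List.Chain', List.isChain_cons, List.isChain_cons]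
    refine ⟨?_, ?_, ih⟩
    · simp
    · intro y hy
      rw [pat_head] at hy
      simp at hy
      subst hy
      simp

lemma infix_split {α : Type*} {p u v : List α} (h : p <:+: u ++ v) :
    p <:+: u ∨ p <:+: v ∨
      ∃ p₁ p₂, p = p₁ ++ p₂ ∧ p₁ ≠ [] ∧ p₂ ≠ [] ∧ p₁ <:+ u ∧ p₂ <+: v := by
  obtain ⟨s, t, hst⟩ := h
  have hL := congrArg List.length hst
  simp only [List.length_append] at hL
  rcases le_or_gt (s.length + p.length) u.length with h1 | h1
  · left
    have hp : s ++ p <+: u := by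
      apply List.prefix_of_prefix_length_le (l₃ := u ++ v)
      · exact ⟨t, by simpa using hst⟩
      · exact List.prefix_append u v
      · simpa using h1
    obtain ⟨r, hr⟩ := hp
    exact ⟨s, r, by simpa using hr⟩
  rcases le_or_gt u.length s.length with h2 | h2
  · right; left
    have hp : p ++ t <:+ v := by
      apply List.suffix_of_suffix_length_le (l₃ := u ++ v)
      · exact ⟨s, by simpa using hst⟩
      · exact List.suffix_append u v
      · simp only [List.length_append]; omega
    obtain ⟨r, hr⟩ := hp
    exact ⟨r, t, by simpa using hr⟩
  · right; right
    set n := u.length - s.length with hn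
    have key : p.take n ++ (p.drop n ++ t) = p ++ t := by
      rw [← List.append_assoc, List.take_append_drop]
    have hassoc : (s ++ p.take n) ++ (p.drop n ++ t) = u ++ v := by
      rw [List.append_assoc, key, ← List.append_assoc, hst]
    refine ⟨p.take n, p.drop n, (List.take_append_drop _ p).symm, ?_, ?_, ?_, ?_⟩
    · have hlen : (p.take n).length = n := by rw [List.length_take]; omega
      intro hnil; rw [hnil] at hlen; simp at hlen; omega
    · have hlen : (p.drop n).length = p.length - n := by simp
      intro hnil; rw [hnil] at hlen; simp at hlen; omega
    · have hpre : s ++ p.take n <+: u := by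
        apply List.prefix_of_prefix_length_le (l₃ := u ++ v)
        · exact ⟨p.drop n ++ t, hassoc⟩
        · exact List.prefix_append u v
        · simp only [List.length_append, List.length_take]; omega
      have heq : s ++ p.take n = u :=
        hpre.eq_of_length (by simp only [List.length_append, List.length_take]; omega)
      exact ⟨s, heq⟩
    · have hsuf : p.drop n ++ t <:+ v := by
        apply List.suffix_of_suffix_length_le (l₃ := u ++ v)
        · exact ⟨s ++ p.take n, hassoc⟩
        · exact List.suffix_append u v
        · simp only [List.length_append, List.length_drop]; omega
      have heq : p.drop n ++ t = v :=
        hsuf.eq_of_length (by simp only [List.length_append, List.length_drop]; omega)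
      exact ⟨t, heq⟩

theorem stmt13 (j : ℕ) (hj : 1 ≤ j) (ω : List Bool) (k : ℤ)
    (hle : ω.count false ≤ ω.count true)
    (havoid : ¬ pat j <:+: ω)
    (hend : ht ω = k) (hk : 2 ≤ k)
    (hsuf : ¬ alt j <:+ ω) :
    ∀ (h m : ℕ), 1 ≤ h → h ≤ j → 2 ≤ m → (m : ℤ) ≤ k →
      ¬ pat j <:+: (ω ++ [true] ++ List.replicate m false ++ alt (h - 1)) ∧
      (ω ++ [true] ++ List.replicate m false ++ alt (h - 1)).count true
        = ω.count true + h ∧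
      ht (ω ++ [true] ++ List.replicate m false ++ alt (h - 1)) = k + 1 - m := by
  intro h m hh1 hhj hm2 hmk
  obtain ⟨h', rfl⟩ : ∃ h', h = h' + 1 := ⟨h - 1, by omega⟩
  obtain ⟨m', rfl⟩ : ∃ m', m = m' + 2 := ⟨m - 2, by omega⟩
  have hh'len : h' + 1 - 1 = h' := by omega
  rw [hh'len]
  refine ⟨?_, ?_, ?_⟩
  · -- avoidance
    intro hin
    have hin' : pat j <:+:
        (ω ++ [true]) ++ (List.replicate (m' + 2) false ++ alt h') := by
      simpa [List.append_assoc] using hin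
    rcases infix_split hin' with H | H | ⟨p₁, p₂, hp, hp₁, hp₂, hs, hpre⟩
    · -- occurrence in ω ++ [true]
      obtain ⟨s, t, hst⟩ := H
      rcases t.eq_nil_or_concat with rfl | ⟨t', b, rfl⟩
      · rw [pat_eq] at hst
        have hst' : (s ++ alt j) ++ [true] = ω ++ [true] := by
          simpa [List.append_assoc] using hst
        exact hsuf ⟨s, (List.append_inj' hst' rfl).1⟩
      · have hst' : (s ++ pat j ++ t') ++ [b] = ω ++ [true] := by
          simpa [List.append_assoc] using hst
        exact havoid ⟨s, t', (List.append_inj' hst' rfl).1⟩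
    · -- occurrence in 0^m ++ alt h'
      rcases infix_split H with H1 | H1 | ⟨p₁, p₂, hp, hp₁, hp₂, hs, hpre⟩
      · have : true ∈ List.replicate (m' + 2) false :=
          H1.subset (by simp [pat_eq])
        simp at this
      · have := H1.length_le
        rw [length_pat, length_alt] at this
        omega
      · rcases p₁ with _ | ⟨a, p₁'⟩
        · exact hp₁ rfl
        · have ha : a = true := by
            have := pat_head j
            rw [hp] at this
            simpa using this
          have ha' : a = false := by
            have : a ∈ List.replicate (m' + 2) false :=
              hs.subset (by simp)
            simpa using this
          rw [ha] at ha'; exact Bool.noConfusion ha'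
    · -- straddling occurrence
      rcases p₂ with _ | ⟨a, p₂'⟩
      · exact hp₂ rfl
      · have hFA : List.replicate (m' + 2) false ++ alt h'
            = false :: false :: (List.replicate m' false ++ alt h') := by
          simp [List.replicate_succ]
        rw [hFA, List.cons_prefix_cons] at hpre
        obtain ⟨rfl, hpre'⟩ := hpre
        rcases p₂' with _ | ⟨b, p₂''⟩
        · -- p₂ = [false], but pat ends with true
          rw [pat_eq] at hp
          have := (List.append_inj' hp rfl).2
          simp at this
        · rw [List.cons_prefix_cons] at hpre'
          obtain ⟨rfl, _⟩ := hpre'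
          have hinf : [false, false] <:+: pat j :=
            ⟨p₁, p₂'', by rw [hp]; simp⟩
          have := (chain_pat j).infix hinf
          simp [List.Chain', List.isChain_cons_cons] at this
  · -- count true
    simp [List.count_append, count_alt, List.count_replicate]
  · -- height
    rw [← hend]
    simp only [ht, List.count_append, count_alt, List.count_replicate]
    push_cast
    simp
    ring
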